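/- Let β > 1 be a real number, k ≥ 1 an integer, and 0 < s < 1. Then there exist constants c, C > 0 (depending only on β, k and s) such that for all integers n ≥ 1: c·n^{k−1}·β^{n(1−s)} ≤ Σ_{(a_1,…,a_k) ∈ (ℕ≥1)^k, a_1·a_2⋯a_k ≤ β^n} (a_1·a_2⋯a_k)^{−s} ≤ C·n^{k−1}·β^{n(1−s)}. -/

import Mathlib

open Filter MeasureTheory Set

/-- The Gauss map `T(x) = 1/x - ⌊1/x⌋`. -/
noncomputable def gaussMap (x : ℝ) : ℝ := 1 / x - (⌊1 / x⌋ : ℤ)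

/-- The `n`-th partial quotient `a_n(x)` (for `n ≥ 1`) of the continued
fraction expansion of `x`: `a_n(x) = ⌊1 / T^{n-1}(x)⌋`. -/
noncomputable def pq (x : ℝ) (n : ℕ) : ℕ := ⌊1 / (gaussMap^[n - 1] x)⌋₊

/-- The continuant `q_n(a_1, …, a_n)`: `q_0 = 1`, `q_1 = a_1`,
`q_k = a_k q_{k-1} + q_{k-2}`. -/
def contQ : (n : ℕ) → (Fin n → ℕ) → ℕ
  | 0, _ => 1
  | 1, a => a 0
  | (n + 2), a =>
      a (Fin.last (n + 1)) * contQ (n + 1) (Fin.init a) +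
        contQ n (Fin.init (Fin.init a))

/-- `s_B`: the Wang–Wu pressure exponent. -/
noncomputable def sExp (B : ℝ) : ℝ :=
  sInf {s : ℝ | 0 ≤ s ∧
    Filter.atTop.limsup (fun n : ℕ =>
      (((n : ℝ)⁻¹ : ℝ) : EReal) * ENNReal.log (∑' a : Fin n → ℕ+,
        ENNReal.ofReal ((B ^ n * ((contQ n fun i => (a i : ℕ)) : ℝ) ^ 2) ^ (-s)))) ≤ 0}

/-- `g_{B₁,B₂}`: the two-parameter pressure exponent. -/
noncomputable def gExp (B₁ B₂ : ℝ) : ℝ :=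
  sInf {s : ℝ | 0 ≤ s ∧
    Filter.atTop.limsup (fun n : ℕ =>
      (((n : ℝ)⁻¹ : ℝ) : EReal) * ENNReal.log (∑' a : Fin n → ℕ+,
        ENNReal.ofReal (B₂ ^ ((1 - s) * (n : ℝ)) *
          (B₁ ^ n * ((contQ n fun i => (a i : ℕ)) : ℝ) ^ 2) ^ (-s)))) ≤ 0}

open scoped ENNReal

noncomputable def Gaux (s : ℝ) (k : ℕ) (X : ℝ) : ℝ≥0∞ :=
  ∑' a : Fin k → ℕ+,
    if (∏ i, ((a i : ℕ) : ℝ)) ≤ X then ENNReal.ofReal ((∏ i, ((a i : ℕ) : ℝ)) ^ (-s)) else 0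

lemma one_le_prod_pnat {k : ℕ} (a : Fin k → ℕ+) : 1 ≤ ∏ i, ((a i : ℕ) : ℝ) := by
  calc (1:ℝ) = ∏ _i : Fin k, 1 := by simp
    _ ≤ ∏ i, ((a i : ℕ) : ℝ) :=
      Finset.prod_le_prod (by intros; norm_num) (by intro i _; exact_mod_cast (a i).one_le)

lemma prod_pnat_pos {k : ℕ} (a : Fin k → ℕ+) : 0 < ∏ i, ((a i : ℕ) : ℝ) :=
  lt_of_lt_of_le one_pos (one_le_prod_pnat a)

lemma Gaux_eq_zero {s X : ℝ} {k : ℕ} (hX : X < 1) : Gaux s k X = 0 := by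
  unfold Gaux
  convert tsum_zero with a
  rw [if_neg]
  exact fun h => absurd (le_trans (one_le_prod_pnat a) h) (not_le.2 hX)

lemma Gaux_zero (s X : ℝ) : Gaux s 0 X = if 1 ≤ X then 1 else 0 := by
  unfold Gaux
  rw [tsum_eq_single (fun i => 1)]
  · simp
  · intro b hb
    exact absurd (Subsingleton.elim b _) hb

lemma Gaux_succ (s : ℝ) (k : ℕ) (X : ℝ) :
    Gaux s (k + 1) X
      = ∑' b : ℕ+, ENNReal.ofReal (((b : ℕ) : ℝ) ^ (-s)) * Gaux s k (X / ((b : ℕ) : ℝ)) := by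
  unfold Gaux
  rw [← (Fin.consEquiv (fun _ : Fin (k+1) => ℕ+)).tsum_eq, ENNReal.tsum_prod']
  congr 1
  funext b
  rw [← ENNReal.tsum_mul_left]
  congr 1
  funext a
  have hb : (0:ℝ) < ((b : ℕ) : ℝ) := by exact_mod_cast b.pos
  have hP : (0:ℝ) ≤ ∏ i, ((a i : ℕ) : ℝ) := (prod_pnat_pos a).le
  have hcons : (∏ i, (((Fin.consEquiv (fun _ : Fin (k+1) => ℕ+)) (b, a) i : ℕ) : ℝ))
      = ((b : ℕ) : ℝ) * ∏ i, ((a i : ℕ) : ℝ) := by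
    have h1 : ((Fin.consEquiv (fun _ : Fin (k+1) => ℕ+)) (b, a)) = Fin.cons b a := rfl
    rw [h1, Fin.prod_univ_succ]
    simp
  rw [hcons]
  by_cases h : (∏ i, ((a i : ℕ) : ℝ)) ≤ X / ((b : ℕ) : ℝ)
  · rw [if_pos h, if_pos ((le_div_iff₀' hb).mp h), Real.mul_rpow hb.le hP,
      ENNReal.ofReal_mul (by positivity)]
  · rw [if_neg h, if_neg (fun hc => h ((le_div_iff₀' hb).mpr hc)), mul_zero]

lemma tsum_pnat_ind (g : ℕ → ℝ) (X : ℝ) (hX : 0 ≤ X) :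
    (∑' b : ℕ+, if ((b : ℕ) : ℝ) ≤ X then ENNReal.ofReal (g (b : ℕ)) else 0)
      = ∑ n ∈ Finset.range ⌊X⌋₊, ENNReal.ofReal (g (n + 1)) := by
  rw [← Equiv.pnatEquivNat.symm.tsum_eq]
  have hco : ∀ n : ℕ, ((Equiv.pnatEquivNat.symm n : ℕ+) : ℕ) = n + 1 := fun n => rfl
  rw [tsum_eq_sum (s := Finset.range ⌊X⌋₊)
    (by
      intro n hn
      rw [hco, if_neg]
      intro hc
      exact hn (Finset.mem_range.mpr (Nat.lt_of_succ_le
        ((Nat.le_floor_iff hX).mpr (by exact_mod_cast hc)))))]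
  apply Finset.sum_congr rfl
  intro n hn
  rw [hco, if_pos]
  exact_mod_cast (Nat.le_floor_iff hX).mp (Nat.succ_le_of_lt (Finset.mem_range.mp hn))

lemma sum_inv_eq_harmonic (M : ℕ) :
    ∑ n ∈ Finset.range M, (((n : ℝ) + 1))⁻¹ = (harmonic M : ℝ) := by
  rw [harmonic]
  push_cast
  rfl

lemma sumInv_upper {X : ℝ} (hX : 1 ≤ X) :
    ∑ n ∈ Finset.range ⌊X⌋₊, (((n : ℝ) + 1))⁻¹ ≤ 1 + Real.log X := by
  rw [sum_inv_eq_harmonic]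
  exact harmonic_floor_le_one_add_log X hX

lemma sumInv_lower {X : ℝ} (hX : 1 ≤ X) :
    (1 + Real.log X) / 2 ≤ ∑ n ∈ Finset.range ⌊X⌋₊, (((n : ℝ) + 1))⁻¹ := by
  have h1 : Real.log X ≤ ∑ n ∈ Finset.range ⌊X⌋₊, (((n : ℝ) + 1))⁻¹ := by
    rw [sum_inv_eq_harmonic]
    exact log_le_harmonic_floor X (by linarith)
  have h2 : (1 : ℝ) ≤ ∑ n ∈ Finset.range ⌊X⌋₊, (((n : ℝ) + 1))⁻¹ := by
    have h0 : (0 : ℕ) ∈ Finset.range ⌊X⌋₊ :=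
      Finset.mem_range.mpr (Nat.floor_pos.mpr hX)
    calc (1:ℝ) = (((0:ℕ):ℝ) + 1)⁻¹ := by norm_num
      _ ≤ _ := Finset.single_le_sum (f := fun n : ℕ => (((n:ℝ)+1))⁻¹)
          (fun i _ => by positivity) h0
  linarith

lemma rpow_neg_antitoneOn {s : ℝ} (hs : 0 < s) :
    AntitoneOn (fun t : ℝ => t ^ (-s)) (Set.Ici 1) := by
  intro x hx y hy hxy
  have hx0 : (0:ℝ) < x := lt_of_lt_of_le one_pos hx
  have hy0 : (0:ℝ) < y := lt_of_lt_of_le one_pos hy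
  simp only
  rw [Real.rpow_neg hx0.le, Real.rpow_neg hy0.le]
  have h1 : x ^ s ≤ y ^ s := Real.rpow_le_rpow hx0.le hxy hs.le
  have h2 : (0:ℝ) < x ^ s := Real.rpow_pos_of_pos hx0 s
  exact inv_anti₀ h2 h1

lemma sumPow_upper {s X : ℝ} (hs : 0 < s) (hs1 : s < 1) (hX : 1 ≤ X) :
    ∑ n ∈ Finset.range ⌊X⌋₊, (((n : ℝ) + 1)) ^ (-s) ≤ (1 + 1 / (1 - s)) * X ^ (1 - s) := by
  have hX0 : (0:ℝ) < X := lt_of_lt_of_le one_pos hX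
  obtain ⟨m, hm⟩ : ∃ m, ⌊X⌋₊ = m + 1 :=
    ⟨⌊X⌋₊ - 1, (Nat.succ_pred_eq_of_pos (Nat.floor_pos.mpr hX)).symm⟩
  have hMX : ((m:ℝ) + 1) ≤ X := by
    have := Nat.floor_le hX0.le (R := ℝ) (a := X)
    rw [hm] at this; push_cast at this; linarith
  have hXpow1 : (1:ℝ) ≤ X ^ (1 - s) := by
    calc (1:ℝ) = X ^ (0:ℝ) := (Real.rpow_zero X).symm
      _ ≤ X ^ (1 - s) := Real.rpow_le_rpow_of_exponent_le hX (by linarith)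
  rw [hm, Finset.sum_range_succ']
  have hint : ∑ i ∈ Finset.range m, (((i:ℝ) + 1) + 1) ^ (-s)
      ≤ ∫ x in (1:ℝ)..(1 + (m:ℕ)), x ^ (-s) := by
    have := AntitoneOn.sum_le_integral (x₀ := 1) (a := m) (f := fun t : ℝ => t ^ (-s))
      ((rpow_neg_antitoneOn hs).mono (fun t ht => le_trans (by norm_num) ht.1))
    refine le_trans (le_of_eq ?_) this
    apply Finset.sum_congr rfl
    intro i _
    push_cast
    ring_nf
  have hval : ∫ x in (1:ℝ)..(1 + (m:ℕ)), x ^ (-s)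
      = ((1 + (m:ℝ)) ^ (1 - s) - 1) / (1 - s) := by
    rw [integral_rpow (Or.inl (by linarith))]
    norm_num
    rw [show (-s + 1) = 1 - s by ring]
  have hle : ((1 + (m:ℝ)) ^ (1 - s) - 1) / (1 - s) ≤ X ^ (1 - s) / (1 - s) := by
    rw [div_le_div_iff_of_pos_right (by linarith : (0:ℝ) < 1 - s)]
    calc (1 + (m:ℝ)) ^ (1 - s) - 1 ≤ (1 + (m:ℝ)) ^ (1 - s) := by linarith
      _ ≤ X ^ (1 - s) := Real.rpow_le_rpow (by positivity) (by linarith) (by linarith)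
  rw [hval] at hint
  have hgoal : ∑ i ∈ Finset.range m, (((i+1:ℕ):ℝ) + 1) ^ (-s)
      = ∑ i ∈ Finset.range m, (((i:ℝ) + 1) + 1) ^ (-s) := by
    apply Finset.sum_congr rfl
    intro i _
    push_cast
    ring_nf
  have h01 : (((0:ℕ):ℝ) + 1) ^ (-s) = 1 := by norm_num
  rw [hgoal, h01]
  have hring : (1 + 1 / (1 - s)) * X ^ (1 - s) = X ^ (1 - s) + X ^ (1 - s) / (1 - s) := by
    ring
  linarith

lemma sumPow_lower {s X : ℝ} (hs : 0 < s) (hX : 1 ≤ X) :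
    X ^ (1 - s) / 2 ≤ ∑ n ∈ Finset.range ⌊X⌋₊, (((n : ℝ) + 1)) ^ (-s) := by
  have hX0 : (0:ℝ) < X := lt_of_lt_of_le one_pos hX
  have hM2 : X / 2 ≤ (⌊X⌋₊ : ℝ) := by
    rcases le_or_gt 2 X with h | h
    · have := Nat.sub_one_lt_floor X
      linarith
    · have : (1:ℕ) ≤ ⌊X⌋₊ := Nat.floor_pos.mpr hX
      have : (1:ℝ) ≤ (⌊X⌋₊ : ℝ) := by exact_mod_cast this
      linarith
  have hterm : ∀ n ∈ Finset.range ⌊X⌋₊, X ^ (-s) ≤ (((n : ℝ) + 1)) ^ (-s) := by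
    intro n hn
    have hn1 : ((n:ℝ) + 1) ≤ X := by
      have : (n + 1 : ℕ) ≤ ⌊X⌋₊ := Nat.succ_le_of_lt (Finset.mem_range.mp hn)
      have h2 := (Nat.le_floor_iff hX0.le).mp this
      push_cast at h2
      linarith
    exact rpow_neg_antitoneOn hs (by simp : ((n:ℝ)+1) ∈ Set.Ici 1) (le_trans (by simp) hn1) hn1
  calc X ^ (1 - s) / 2 = (X / 2) * X ^ (-s) := by
        rw [show (1 - s) = 1 + (-s) by ring, Real.rpow_add hX0, Real.rpow_one]
        ring
    _ ≤ (⌊X⌋₊ : ℝ) * X ^ (-s) :=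
        mul_le_mul_of_nonneg_right hM2 (Real.rpow_nonneg hX0.le _)
    _ ≤ ∑ n ∈ Finset.range ⌊X⌋₊, (((n : ℝ) + 1)) ^ (-s) := by
        have := Finset.card_nsmul_le_sum (Finset.range ⌊X⌋₊)
          (fun n : ℕ => (((n : ℝ) + 1)) ^ (-s)) (X ^ (-s)) hterm
        rwa [Finset.card_range, nsmul_eq_mul] at this

lemma Gaux_one (s X : ℝ) :
    Gaux s 1 X = ∑' b : ℕ+, if ((b : ℕ) : ℝ) ≤ X then ENNReal.ofReal (((b : ℕ) : ℝ) ^ (-s)) else 0 := by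
  rw [show (1 : ℕ) = 0 + 1 from rfl, Gaux_succ]
  congr 1
  funext b
  have hb0 : (0:ℝ) < ((b : ℕ) : ℝ) := by exact_mod_cast b.pos
  rw [Gaux_zero]
  by_cases h : ((b : ℕ) : ℝ) ≤ X
  · rw [if_pos ((one_le_div hb0).mpr h), if_pos h, mul_one]
  · rw [if_neg (fun hc => h ((one_le_div hb0).mp hc)), if_neg h, mul_zero]

lemma key_identity {s X : ℝ} (hs : 0 < s) (hs1 : s < 1) {b : ℝ} (hb : 1 ≤ b) (hX : 0 < X) :
    b ^ (-s) * (X / b) ^ (1 - s) = X ^ (1 - s) * b⁻¹ := by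
  have hb0 : (0:ℝ) < b := lt_of_lt_of_le one_pos hb
  have h1 : b ^ (-s) / b ^ (1 - s) = b⁻¹ := by
    rw [← Real.rpow_sub hb0, show -s - (1 - s) = (-1 : ℝ) by ring, Real.rpow_neg_one]
  rw [Real.div_rpow hX.le hb0.le, ← h1]
  ring

lemma Gaux_upper {s : ℝ} (hs : 0 < s) (hs1 : s < 1) (m : ℕ) :
    ∃ C : ℝ, 0 < C ∧ ∀ X : ℝ, 1 ≤ X →
      Gaux s (m + 1) X ≤ ENNReal.ofReal (C * (X ^ (1 - s) * (1 + Real.log X) ^ m)) := by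
  induction m with
  | zero =>
    refine ⟨1 + 1 / (1 - s), by have h15 : (0:ℝ) < 1 / (1 - s) := div_pos one_pos (by linarith); linarith, ?_⟩
    intro X hX
    rw [Gaux_one, tsum_pnat_ind (g := fun n => ((n : ℝ)) ^ (-s)) X (by linarith)]
    have hsum : ∑ n ∈ Finset.range ⌊X⌋₊, ENNReal.ofReal ((((n+1 : ℕ)) : ℝ) ^ (-s))
        = ENNReal.ofReal (∑ n ∈ Finset.range ⌊X⌋₊, (((n : ℝ) + 1)) ^ (-s)) := by
      rw [ENNReal.ofReal_sum_of_nonneg (fun n _ => by positivity)]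
      apply Finset.sum_congr rfl
      intro n _
      push_cast
      ring_nf
    rw [hsum]
    apply ENNReal.ofReal_le_ofReal
    simpa using sumPow_upper hs hs1 hX
  | succ m ih =>
    obtain ⟨C, hC, hCb⟩ := ih
    refine ⟨C, hC, ?_⟩
    intro X hX
    have hX0 : (0:ℝ) < X := lt_of_lt_of_le one_pos hX
    set K := C * (X ^ (1 - s) * (1 + Real.log X) ^ m) with hK
    have hK0 : 0 ≤ K := by
      have h1 : (0:ℝ) ≤ 1 + Real.log X := by
        have := Real.log_nonneg hX; linarith
      positivity
    have hbound : ∀ b : ℕ+,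
        ENNReal.ofReal (((b : ℕ) : ℝ) ^ (-s)) * Gaux s (m + 1) (X / ((b : ℕ) : ℝ))
          ≤ if ((b : ℕ) : ℝ) ≤ X then ENNReal.ofReal (K * ((b : ℕ) : ℝ)⁻¹) else 0 := by
      intro b
      have hb0 : (0:ℝ) < ((b : ℕ) : ℝ) := by exact_mod_cast b.pos
      have hb1 : (1:ℝ) ≤ ((b : ℕ) : ℝ) := by exact_mod_cast b.one_le
      by_cases h : ((b : ℕ) : ℝ) ≤ X
      · rw [if_pos h]
        have hXb : 1 ≤ X / ((b : ℕ) : ℝ) := (one_le_div hb0).mpr h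
        have hlog0 : 0 ≤ Real.log (X / ((b : ℕ) : ℝ)) := Real.log_nonneg hXb
        have hlogle : Real.log (X / ((b : ℕ) : ℝ)) ≤ Real.log X :=
          Real.log_le_log (by positivity) (div_le_self hX0.le hb1)
        calc ENNReal.ofReal (((b : ℕ) : ℝ) ^ (-s)) * Gaux s (m + 1) (X / ((b : ℕ) : ℝ))
            ≤ ENNReal.ofReal (((b : ℕ) : ℝ) ^ (-s)) *
              ENNReal.ofReal (C * ((X / ((b : ℕ) : ℝ)) ^ (1 - s) *
                (1 + Real.log (X / ((b : ℕ) : ℝ))) ^ m)) :=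
              mul_le_mul_right (hCb _ hXb) _
          _ = ENNReal.ofReal (((b : ℕ) : ℝ) ^ (-s) * (C * ((X / ((b : ℕ) : ℝ)) ^ (1 - s) *
                (1 + Real.log (X / ((b : ℕ) : ℝ))) ^ m))) :=
              (ENNReal.ofReal_mul (by positivity)).symm
          _ ≤ ENNReal.ofReal (K * ((b : ℕ) : ℝ)⁻¹) := by
              apply ENNReal.ofReal_le_ofReal
              have e1 := key_identity hs hs1 hb1 hX0 (b := ((b : ℕ) : ℝ))
              have e2 : (1 + Real.log (X / ((b : ℕ) : ℝ))) ^ m ≤ (1 + Real.log X) ^ m :=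
                pow_le_pow_left₀ (by linarith) (by linarith) m
              calc ((b : ℕ) : ℝ) ^ (-s) * (C * ((X / ((b : ℕ) : ℝ)) ^ (1 - s) *
                    (1 + Real.log (X / ((b : ℕ) : ℝ))) ^ m))
                  = C * (((b : ℕ) : ℝ) ^ (-s) * (X / ((b : ℕ) : ℝ)) ^ (1 - s)) *
                    (1 + Real.log (X / ((b : ℕ) : ℝ))) ^ m := by ring
                _ = C * (X ^ (1 - s) * ((b : ℕ) : ℝ)⁻¹) *
                    (1 + Real.log (X / ((b : ℕ) : ℝ))) ^ m := by rw [e1]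
                _ ≤ C * (X ^ (1 - s) * ((b : ℕ) : ℝ)⁻¹) * (1 + Real.log X) ^ m := by
                    apply mul_le_mul_of_nonneg_left e2
                    positivity
                _ = K * ((b : ℕ) : ℝ)⁻¹ := by rw [hK]; ring
      · rw [if_neg h]
        have : Gaux s (m + 1) (X / ((b : ℕ) : ℝ)) = 0 :=
          Gaux_eq_zero ((div_lt_one hb0).mpr (lt_of_not_ge h))
        rw [this, mul_zero]
    calc Gaux s (m + 1 + 1) X
        = ∑' b : ℕ+, ENNReal.ofReal (((b : ℕ) : ℝ) ^ (-s)) *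
            Gaux s (m + 1) (X / ((b : ℕ) : ℝ)) := Gaux_succ s (m+1) X
      _ ≤ ∑' b : ℕ+, if ((b : ℕ) : ℝ) ≤ X then ENNReal.ofReal (K * ((b : ℕ) : ℝ)⁻¹) else 0 :=
          ENNReal.tsum_le_tsum hbound
      _ = ∑ n ∈ Finset.range ⌊X⌋₊, ENNReal.ofReal (K * (((n+1 : ℕ)) : ℝ)⁻¹) :=
          tsum_pnat_ind (g := fun n => K * ((n : ℝ))⁻¹) X (by linarith)
      _ = ENNReal.ofReal (K * ∑ n ∈ Finset.range ⌊X⌋₊, (((n : ℝ) + 1))⁻¹) := by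
          rw [Finset.mul_sum, ENNReal.ofReal_sum_of_nonneg
            (fun n _ => by positivity)]
          apply Finset.sum_congr rfl
          intro n _
          push_cast
          ring_nf
      _ ≤ ENNReal.ofReal (K * (1 + Real.log X)) := by
          apply ENNReal.ofReal_le_ofReal
          exact mul_le_mul_of_nonneg_left (sumInv_upper hX) hK0
      _ = ENNReal.ofReal (C * (X ^ (1 - s) * (1 + Real.log X) ^ (m + 1))) := by
          rw [hK]
          ring_nf

lemma Gaux_lower {s : ℝ} (hs : 0 < s) (hs1 : s < 1) (m : ℕ) :
    ∃ c : ℝ, 0 < c ∧ ∀ X : ℝ, 1 ≤ X →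
      ENNReal.ofReal (c * (X ^ (1 - s) * (1 + Real.log X) ^ m)) ≤ Gaux s (m + 1) X := by
  induction m with
  | zero =>
    refine ⟨1/2, by norm_num, ?_⟩
    intro X hX
    rw [Gaux_one, tsum_pnat_ind (g := fun n => ((n : ℝ)) ^ (-s)) X (by linarith)]
    have hsum : ∑ n ∈ Finset.range ⌊X⌋₊, ENNReal.ofReal ((((n+1 : ℕ)) : ℝ) ^ (-s))
        = ENNReal.ofReal (∑ n ∈ Finset.range ⌊X⌋₊, (((n : ℝ) + 1)) ^ (-s)) := by
      rw [ENNReal.ofReal_sum_of_nonneg (fun n _ => by positivity)]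
      apply Finset.sum_congr rfl
      intro n _
      push_cast
      ring_nf
    rw [hsum]
    apply ENNReal.ofReal_le_ofReal
    calc (1/2) * (X ^ (1-s) * (1 + Real.log X) ^ 0) = X ^ (1-s) / 2 := by ring
      _ ≤ _ := sumPow_lower hs hX
  | succ m ih =>
    obtain ⟨c, hc, hcb⟩ := ih
    refine ⟨c / (2 ^ m * 4), by positivity, ?_⟩
    intro X hX
    have hX0 : (0:ℝ) < X := lt_of_lt_of_le one_pos hX
    have hlogX : 0 ≤ Real.log X := Real.log_nonneg hX
    set Y := Real.sqrt X with hYdef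
    have hY1 : 1 ≤ Y := by
      rw [hYdef, show (1:ℝ) = Real.sqrt 1 by rw [Real.sqrt_one]]
      exact Real.sqrt_le_sqrt hX
    have hY0 : (0:ℝ) < Y := lt_of_lt_of_le one_pos hY1
    have hlogY : Real.log Y = Real.log X / 2 := Real.log_sqrt hX0.le
    set K := (c / 2 ^ m) * (X ^ (1 - s) * (1 + Real.log X) ^ m) with hK
    have hK0 : 0 ≤ K := by positivity
    have hbound : ∀ b : ℕ+,
        (if ((b : ℕ) : ℝ) ≤ Y then ENNReal.ofReal (K * ((b : ℕ) : ℝ)⁻¹) else 0)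
          ≤ ENNReal.ofReal (((b : ℕ) : ℝ) ^ (-s)) * Gaux s (m + 1) (X / ((b : ℕ) : ℝ)) := by
      intro b
      have hb0 : (0:ℝ) < ((b : ℕ) : ℝ) := by exact_mod_cast b.pos
      have hb1 : (1:ℝ) ≤ ((b : ℕ) : ℝ) := by exact_mod_cast b.one_le
      by_cases h : ((b : ℕ) : ℝ) ≤ Y
      · rw [if_pos h]
        have hYle : Y ≤ X / ((b : ℕ) : ℝ) := by
          have h2 : X / Y ≤ X / ((b : ℕ) : ℝ) := by gcongr
          rwa [hYdef, Real.div_sqrt] at h2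
        have hXb1 : 1 ≤ X / ((b : ℕ) : ℝ) := le_trans hY1 hYle
        have hlogb : Real.log X / 2 ≤ Real.log (X / ((b : ℕ) : ℝ)) := by
          rw [← hlogY]
          exact Real.log_le_log hY0 hYle
        have h2 : (1 + Real.log X) / 2 ≤ 1 + Real.log (X / ((b : ℕ) : ℝ)) := by linarith
        have hpow : ((1 + Real.log X) / 2) ^ m ≤ (1 + Real.log (X / ((b : ℕ) : ℝ))) ^ m :=
          pow_le_pow_left₀ (by linarith) h2 m
        calc ENNReal.ofReal (K * ((b : ℕ) : ℝ)⁻¹)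
            ≤ ENNReal.ofReal (((b : ℕ) : ℝ) ^ (-s) * (c * ((X / ((b : ℕ) : ℝ)) ^ (1 - s) *
                (1 + Real.log (X / ((b : ℕ) : ℝ))) ^ m))) := by
              apply ENNReal.ofReal_le_ofReal
              have e1 := key_identity hs hs1 hb1 hX0 (b := ((b : ℕ) : ℝ))
              calc K * ((b : ℕ) : ℝ)⁻¹
                  = c * (X ^ (1 - s) * ((b : ℕ) : ℝ)⁻¹) * ((1 + Real.log X) / 2) ^ m := by
                    rw [hK, div_pow]; ring
                _ = c * (((b : ℕ) : ℝ) ^ (-s) * (X / ((b : ℕ) : ℝ)) ^ (1 - s)) *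
                    ((1 + Real.log X) / 2) ^ m := by rw [e1]
                _ ≤ c * (((b : ℕ) : ℝ) ^ (-s) * (X / ((b : ℕ) : ℝ)) ^ (1 - s)) *
                    (1 + Real.log (X / ((b : ℕ) : ℝ))) ^ m := by
                    apply mul_le_mul_of_nonneg_left hpow
                    positivity
                _ = ((b : ℕ) : ℝ) ^ (-s) * (c * ((X / ((b : ℕ) : ℝ)) ^ (1 - s) *
                    (1 + Real.log (X / ((b : ℕ) : ℝ))) ^ m)) := by ring
          _ = ENNReal.ofReal (((b : ℕ) : ℝ) ^ (-s)) * ENNReal.ofReal (c * ((X / ((b : ℕ) : ℝ)) ^ (1 - s) *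
                (1 + Real.log (X / ((b : ℕ) : ℝ))) ^ m)) :=
              ENNReal.ofReal_mul (by positivity)
          _ ≤ ENNReal.ofReal (((b : ℕ) : ℝ) ^ (-s)) * Gaux s (m + 1) (X / ((b : ℕ) : ℝ)) :=
              mul_le_mul_right (hcb _ hXb1) _
      · rw [if_neg h]
        exact zero_le
    calc ENNReal.ofReal (c / (2 ^ m * 4) * (X ^ (1 - s) * (1 + Real.log X) ^ (m + 1)))
        ≤ ENNReal.ofReal (K * ((1 + Real.log Y) / 2)) := by
          apply ENNReal.ofReal_le_ofReal
          rw [hK, hlogY, pow_succ]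
          have h14 : (1 + Real.log X) / 4 ≤ (1 + Real.log X / 2) / 2 := by linarith
          have hnn : (0:ℝ) ≤ c / 2 ^ m * (X ^ (1 - s) * (1 + Real.log X) ^ m) :=
            mul_nonneg (by positivity) (mul_nonneg (Real.rpow_nonneg hX0.le _)
              (pow_nonneg (by linarith) _))
          calc c / (2 ^ m * 4) * (X ^ (1 - s) * ((1 + Real.log X) ^ m * (1 + Real.log X)))
              = (c / 2 ^ m * (X ^ (1 - s) * (1 + Real.log X) ^ m)) * ((1 + Real.log X) / 4) := by
                ring
            _ ≤ (c / 2 ^ m * (X ^ (1 - s) * (1 + Real.log X) ^ m)) *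
                  ((1 + Real.log X / 2) / 2) := mul_le_mul_of_nonneg_left h14 hnn
      _ ≤ ENNReal.ofReal (K * ∑ n ∈ Finset.range ⌊Y⌋₊, (((n : ℝ) + 1))⁻¹) := by
          apply ENNReal.ofReal_le_ofReal
          exact mul_le_mul_of_nonneg_left (sumInv_lower hY1) hK0
      _ = ∑ n ∈ Finset.range ⌊Y⌋₊, ENNReal.ofReal (K * (((n+1 : ℕ)) : ℝ)⁻¹) := by
          rw [Finset.mul_sum, ENNReal.ofReal_sum_of_nonneg (fun n _ => by positivity)]
          apply Finset.sum_congr rfl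
          intro n _
          push_cast
          ring_nf
      _ = ∑' b : ℕ+, (if ((b : ℕ) : ℝ) ≤ Y then ENNReal.ofReal (K * ((b : ℕ) : ℝ)⁻¹) else 0) :=
          (tsum_pnat_ind (g := fun n => K * ((n : ℝ))⁻¹) Y (by linarith)).symm
      _ ≤ ∑' b : ℕ+, ENNReal.ofReal (((b : ℕ) : ℝ) ^ (-s)) *
            Gaux s (m + 1) (X / ((b : ℕ) : ℝ)) := ENNReal.tsum_le_tsum hbound
      _ = Gaux s (m + 1 + 1) X := (Gaux_succ s (m+1) X).symm

theorem huang_wu_xu_sum_estimate (β : ℝ) (hβ : 1 < β) (k : ℕ) (hk : 1 ≤ k)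
    (s : ℝ) (hs : 0 < s) (hs1 : s < 1) :
    ∃ c C : ℝ, 0 < c ∧ 0 < C ∧ ∀ n : ℕ, 1 ≤ n →
      c * (n : ℝ) ^ (k - 1) * β ^ ((n : ℝ) * (1 - s)) ≤
        (∑' a : Fin k → ℕ+,
          if (∏ i, ((a i : ℕ) : ℝ)) ≤ β ^ n then (∏ i, ((a i : ℕ) : ℝ)) ^ (-s)
          else 0) ∧
      (∑' a : Fin k → ℕ+,
          if (∏ i, ((a i : ℕ) : ℝ)) ≤ β ^ n then (∏ i, ((a i : ℕ) : ℝ)) ^ (-s)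
          else 0) ≤ C * (n : ℝ) ^ (k - 1) * β ^ ((n : ℝ) * (1 - s)) := by
  obtain ⟨m, rfl⟩ : ∃ m, k = m + 1 := ⟨k - 1, (Nat.succ_pred_eq_of_pos hk).symm⟩
  have hβ0 : (0:ℝ) < β := lt_trans one_pos hβ
  have hL : 0 < Real.log β := Real.log_pos hβ
  obtain ⟨c, hc, hcb⟩ := Gaux_lower hs hs1 m
  obtain ⟨C, hC, hCb⟩ := Gaux_upper hs hs1 m
  refine ⟨c * Real.log β ^ m, C * (1 + Real.log β) ^ m, by positivity, by positivity, ?_⟩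
  intro n hn
  simp only [Nat.add_sub_cancel]
  have hn1 : (1:ℝ) ≤ (n:ℝ) := by exact_mod_cast hn
  set X : ℝ := β ^ n with hXdef
  have hX1 : 1 ≤ X := one_le_pow₀ hβ.le
  have hX0 : (0:ℝ) < X := lt_of_lt_of_le one_pos hX1
  have hlogX : Real.log X = n * Real.log β := by
    rw [hXdef, Real.log_pow]
  have hlogX0 : 0 ≤ Real.log X := Real.log_nonneg hX1
  have hrpow : β ^ ((n:ℝ) * (1 - s)) = X ^ (1 - s) := by
    rw [Real.rpow_mul hβ0.le, Real.rpow_natCast]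
  set f : (Fin (m+1) → ℕ+) → ℝ := fun a =>
    if (∏ i, ((a i : ℕ) : ℝ)) ≤ X then (∏ i, ((a i : ℕ) : ℝ)) ^ (-s) else 0 with hf
  have hfnn : ∀ a, 0 ≤ f a := by
    intro a
    rw [hf]
    dsimp only
    split
    · positivity
    · exact le_refl 0
  have hGf : Gaux s (m+1) X = ∑' a, ENNReal.ofReal (f a) := by
    unfold Gaux
    congr 1
    funext a
    rw [hf]
    dsimp only
    split <;> simp
  have hfin : Gaux s (m+1) X ≠ ⊤ :=
    ne_top_of_le_ne_top ENNReal.ofReal_ne_top (hCb X hX1)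
  have hsumm : Summable f := by
    have h1 : Summable (fun a => (ENNReal.ofReal (f a)).toReal) :=
      ENNReal.summable_toReal (by rw [← hGf]; exact hfin)
    exact h1.congr (fun a => ENNReal.toReal_ofReal (hfnn a))
  have hofS : ENNReal.ofReal (∑' a, f a) = Gaux s (m+1) X := by
    rw [ENNReal.ofReal_tsum_of_nonneg hfnn hsumm, hGf]
  have hS0 : (0:ℝ) ≤ ∑' a, f a := tsum_nonneg hfnn
  constructor
  · have h1 := hcb X hX1
    rw [← hofS] at h1
    have h2 : c * (X ^ (1-s) * (1 + Real.log X) ^ m) ≤ ∑' a, f a :=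
      (ENNReal.ofReal_le_ofReal_iff hS0).mp h1
    refine le_trans ?_ h2
    rw [hrpow, hlogX]
    have hpow : (Real.log β * n) ^ m ≤ (1 + n * Real.log β) ^ m :=
      pow_le_pow_left₀ (by positivity) (by linarith) m
    calc c * Real.log β ^ m * (n:ℝ) ^ m * X ^ (1 - s)
        = c * (Real.log β * n) ^ m * X ^ (1 - s) := by rw [mul_pow]; ring
      _ ≤ c * (1 + n * Real.log β) ^ m * X ^ (1 - s) := by
          apply mul_le_mul_of_nonneg_right (mul_le_mul_of_nonneg_left hpow hc.le)
            (Real.rpow_nonneg hX0.le _)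
      _ = c * (X ^ (1 - s) * (1 + (n:ℝ) * Real.log β) ^ m) := by ring
  · have h1 := hCb X hX1
    rw [← hofS] at h1
    have h2 : (∑' a, f a) ≤ C * (X ^ (1-s) * (1 + Real.log X) ^ m) := by
      have hR0 : (0:ℝ) ≤ C * (X ^ (1-s) * (1 + Real.log X) ^ m) :=
        mul_nonneg hC.le (mul_nonneg (Real.rpow_nonneg hX0.le _)
          (pow_nonneg (by linarith) _))
      exact (ENNReal.ofReal_le_ofReal_iff hR0).mp h1
    refine le_trans h2 ?_
    rw [hrpow, hlogX]
    have hpow : (1 + n * Real.log β) ^ m ≤ ((1 + Real.log β) * n) ^ m :=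
      pow_le_pow_left₀ (by positivity) (by nlinarith) m
    calc C * (X ^ (1 - s) * (1 + (n:ℝ) * Real.log β) ^ m)
        ≤ C * (X ^ (1 - s) * ((1 + Real.log β) * n) ^ m) := by
          apply mul_le_mul_of_nonneg_left (mul_le_mul_of_nonneg_left hpow
            (Real.rpow_nonneg hX0.le _)) hC.le
      _ = C * (1 + Real.log β) ^ m * (n:ℝ) ^ m * X ^ (1 - s) := by rw [mul_pow]; ring
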